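/- Assume additionally that μ := m ∑_{n≥1} g H^n 1^t < ∞. Then m ∑_{n≥1} g H^n q^t = ρ. -/

import Mathlib

/-- Right action of an infinite matrix on a column vector: `(H y)_i = ∑_j H_{ij} y_j`. -/
noncomputable def matVec (H : ℕ → ℕ → ℝ) (y : ℕ → ℝ) : ℕ → ℝ := fun i => ∑' j, H i j * y j

/-- `k`-fold right action: `(H^k y)_i`. -/
noncomputable def matPow (H : ℕ → ℕ → ℝ) : ℕ → (ℕ → ℝ) → ℕ → ℝ
  | 0, y => y
  | k + 1, y => matVec H (matPow H k y)

/-- Left action of an infinite matrix on a row vector: `(x H)_j = ∑_i x_i H_{ij}`. -/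
noncomputable def vecMat (x : ℕ → ℝ) (H : ℕ → ℕ → ℝ) : ℕ → ℝ := fun j => ∑' i, x i * H i j

/-- `k`-fold left action: `(x H^k)_j`. -/
noncomputable def vecPow (x : ℕ → ℝ) (H : ℕ → ℕ → ℝ) : ℕ → ℕ → ℝ
  | 0 => x
  | k + 1 => vecMat (vecPow x H k) H

/-- Key exchange lemma: for nonneg summable row vector `x` and `0 ≤ y ≤ 1`,
`∑_j (xH)_j y_j` is a convergent sum equal to `∑_i x_i (Hy)_i`. -/
lemma vecMat_pair (H : ℕ → ℕ → ℝ) (hH : ∀ i j, 0 ≤ H i j)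
    (hHsum : ∀ i, Summable (H i)) (hHrow : ∀ i, ∑' j, H i j ≤ 1)
    (x : ℕ → ℝ) (hx0 : ∀ i, 0 ≤ x i) (hxs : Summable x)
    (y : ℕ → ℝ) (hy0 : ∀ j, 0 ≤ y j) (hy1 : ∀ j, y j ≤ 1) :
    Summable (fun j => vecMat x H j * y j) ∧
      ∑' j, vecMat x H j * y j = ∑' i, x i * ∑' j, H i j * y j := by
  set F : ℕ × ℕ → ℝ := fun p => x p.1 * (H p.1 p.2 * y p.2) with hF
  have hF0 : 0 ≤ F := fun p => mul_nonneg (hx0 _) (mul_nonneg (hH _ _) (hy0 _))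
  have hrow : ∀ i, Summable fun j => H i j * y j := fun i =>
    Summable.of_nonneg_of_le (fun j => mul_nonneg (hH _ _) (hy0 _))
      (fun j => by
        calc H i j * y j ≤ H i j * 1 := mul_le_mul_of_nonneg_left (hy1 j) (hH i j)
        _ = H i j := mul_one _) (hHsum i)
  have hrowle : ∀ i, ∑' j, H i j * y j ≤ 1 := fun i =>
    le_trans (Summable.tsum_le_tsum (fun j => by
      calc H i j * y j ≤ H i j * 1 := mul_le_mul_of_nonneg_left (hy1 j) (hH i j)
      _ = H i j := mul_one _) (hrow i) (hHsum i)) (hHrow i)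
  have hrow0 : ∀ i, 0 ≤ ∑' j, H i j * y j := fun i =>
    tsum_nonneg fun j => mul_nonneg (hH _ _) (hy0 _)
  have hFrows : ∀ i, Summable fun j => F (i, j) := fun i => (hrow i).mul_left (x i)
  have hFrowsums : Summable fun i => ∑' j, F (i, j) := by
    apply Summable.of_nonneg_of_le (fun i => tsum_nonneg fun j => hF0 (i, j))
      (fun i => ?_) hxs
    show ∑' j, x i * (H i j * y j) ≤ x i
    rw [tsum_mul_left]
    calc x i * ∑' j, H i j * y j ≤ x i * 1 :=
        mul_le_mul_of_nonneg_left (hrowle i) (hx0 i)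
      _ = x i := mul_one _
  have hFs : Summable F := (summable_prod_of_nonneg hF0).mpr ⟨hFrows, hFrowsums⟩
  have hcols : Summable fun j => ∑' i, F (i, j) := by
    have := (summable_prod_of_nonneg (f := fun p : ℕ × ℕ => F p.swap)
      (fun p => hF0 p.swap)).mp hFs.prod_symm
    exact this.2
  have heq : (fun j => vecMat x H j * y j) = fun j => ∑' i, F (i, j) := by
    funext j
    show (∑' i, x i * H i j) * y j = ∑' i, x i * (H i j * y j)
    rw [← tsum_mul_right]
    exact tsum_congr fun i => mul_assoc _ _ _
  constructor
  · rw [heq]; exact hcols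
  · calc ∑' j, vecMat x H j * y j = ∑' j, ∑' i, F (i, j) := by rw [heq]
      _ = ∑' i, ∑' j, F (i, j) := Summable.tsum_comm (f := fun i j => F (i, j)) hFs
      _ = ∑' i, x i * ∑' j, H i j * y j := tsum_congr fun i => by
          show ∑' j, x i * (H i j * y j) = _
          rw [tsum_mul_left]

/-- if `μ := m ∑_{n≥1} g H^n 1^t < ∞`, then `m ∑_{n≥1} g H^n q^t = ρ`. -/
theorem sum_gHn_q_identity
    (H : ℕ → ℕ → ℝ) (g q : ℕ → ℝ) (m ρ : ℝ)
    (hH : ∀ i j, 0 ≤ H i j) (hHsum : ∀ i, Summable (H i)) (hHrow : ∀ i, ∑' j, H i j ≤ 1)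
    (hg : ∀ j, 0 ≤ g j) (hgsum : Summable g) (hg1 : ∑' j, g j = 1)
    (hm : 0 < m) (hρ1 : 1 < ρ) (hρm : ρ < 1 + m)
    (hq0 : ∀ i, 0 < q i) (hq1 : ∀ i, q i < 1)
    (hHq : ∀ i, ∑' j, H i j * q j = ρ * ((∑' j, H i j) - 1 + q i))
    (hgq : ∑' j, g j * q j = (1 + m - ρ) / m)
    (hμfin : Summable fun n : ℕ => ∑' j, vecPow g H (n + 1) j) :
    m * ∑' n : ℕ, (∑' j, vecPow g H (n + 1) j * q j) = ρ := by
  set x : ℕ → ℕ → ℝ := vecPow g H with hx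
  -- basic properties of x n
  have hxprop : ∀ n, (∀ j, 0 ≤ x n j) ∧ Summable (x n) := by
    intro n
    induction n with
    | zero => exact ⟨hg, hgsum⟩
    | succ k ih =>
      have key := vecMat_pair H hH hHsum hHrow (x k) ih.1 ih.2
        (fun _ => 1) (fun _ => zero_le_one) (fun _ => le_refl 1)
      constructor
      · intro j
        exact tsum_nonneg fun i => mul_nonneg (ih.1 i) (hH i j)
      · have := key.1
        exact (by simpa [mul_one] using this : Summable fun j => vecMat (x k) H j)
  have hx0 : ∀ n j, 0 ≤ x n j := fun n => (hxprop n).1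
  have hxs : ∀ n, Summable (x n) := fun n => (hxprop n).2
  set A : ℕ → ℝ := fun n => ∑' j, x n j with hA
  set B : ℕ → ℝ := fun n => ∑' j, x n j * q j with hB
  have hq0' : ∀ j, 0 ≤ q j := fun j => (hq0 j).le
  have hq1' : ∀ j, q j ≤ 1 := fun j => (hq1 j).le
  -- B n ≤ A n and summability of B-shifted
  have hBsum : ∀ n, Summable fun j => x n j * q j := fun n =>
    Summable.of_nonneg_of_le (fun j => mul_nonneg (hx0 n j) (hq0' j))
      (fun j => by
        calc x n j * q j ≤ x n j * 1 := mul_le_mul_of_nonneg_left (hq1' j) (hx0 n j)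
          _ = x n j := mul_one _) (hxs n)
  have hBleA : ∀ n, B n ≤ A n := fun n =>
    Summable.tsum_le_tsum (fun j => by
      calc x n j * q j ≤ x n j * 1 := mul_le_mul_of_nonneg_left (hq1' j) (hx0 n j)
        _ = x n j := mul_one _) (hBsum n) (hxs n)
  have hB0 : ∀ n, 0 ≤ B n := fun n =>
    tsum_nonneg fun j => mul_nonneg (hx0 n j) (hq0' j)
  have hAshift : Summable fun n => A (n + 1) := hμfin
  have hBshift : Summable fun n => B (n + 1) :=
    Summable.of_nonneg_of_le (fun n => hB0 _) (fun n => hBleA _) hAshift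
  -- the recursion B (n+1) = ρ * (A (n+1) - A n + B n)
  have hrec : ∀ n, B (n + 1) = ρ * (A (n + 1) - A n + B n) := by
    intro n
    have keyq := vecMat_pair H hH hHsum hHrow (x n) (hx0 n) (hxs n) q hq0' hq1'
    have key1 := vecMat_pair H hH hHsum hHrow (x n) (hx0 n) (hxs n)
      (fun _ => 1) (fun _ => zero_le_one) (fun _ => le_refl 1)
    have hx1 : x (n + 1) = vecMat (x n) H := rfl
    have hBstep : B (n + 1) = ∑' i, x n i * ∑' j, H i j * q j := keyq.2
    have hAstep : A (n + 1) = ∑' i, x n i * ∑' j, H i j := by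
      have := key1.2
      simp only [mul_one] at this
      exact this
    rw [hBstep]
    have : ∀ i, x n i * ∑' j, H i j * q j
        = ρ * (x n i * ∑' j, H i j) - ρ * x n i + ρ * (x n i * q i) := by
      intro i; rw [hHq i]; ring
    rw [tsum_congr this]
    -- summabilities for splitting
    have s1 : Summable fun i => x n i * ∑' j, H i j :=
      Summable.of_nonneg_of_le
        (fun i => mul_nonneg (hx0 n i) (tsum_nonneg fun j => hH i j))
        (fun i => by
          calc x n i * ∑' j, H i j ≤ x n i * 1 :=
              mul_le_mul_of_nonneg_left (hHrow i) (hx0 n i)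
            _ = x n i := mul_one _) (hxs n)
    have s2 : Summable fun i => x n i * q i := hBsum n
    have split : ∑' i, (ρ * (x n i * ∑' j, H i j) - ρ * x n i + ρ * (x n i * q i))
        = ρ * (∑' i, x n i * ∑' j, H i j) - ρ * (∑' i, x n i) + ρ * (∑' i, x n i * q i) := by
      rw [Summable.tsum_add (Summable.sub (s1.mul_left ρ) ((hxs n).mul_left ρ)) (s2.mul_left ρ),
        Summable.tsum_sub (s1.mul_left ρ) ((hxs n).mul_left ρ), tsum_mul_left, tsum_mul_left,
        tsum_mul_left]
    rw [split, ← hAstep]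
    show ρ * A (n + 1) - ρ * A n + ρ * B n = ρ * (A (n + 1) - A n + B n)
    ring
  -- summability of n ↦ A n and n ↦ B n (with the n = 0 term)
  have hAsum : Summable A := by
    have := hAshift
    exact (summable_nat_add_iff 1).mp (by simpa using this)
  have hBsum' : Summable B := (summable_nat_add_iff 1).mp (by simpa using hBshift)
  -- the series identity
  have hSrec : ∑' n, B (n + 1)
      = ρ * ((∑' n, A (n + 1)) - (∑' n, A n) + ∑' n, B n) := by
    calc ∑' n, B (n + 1) = ∑' n, ρ * (A (n + 1) - A n + B n) := tsum_congr hrec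
      _ = ρ * ∑' n, (A (n + 1) - A n + B n) := tsum_mul_left
      _ = ρ * ((∑' n, A (n + 1)) - (∑' n, A n) + ∑' n, B n) := by
          rw [Summable.tsum_add (Summable.sub hAshift hAsum) hBsum',
            Summable.tsum_sub hAshift hAsum]
  have hAtel : ∑' n, A n = A 0 + ∑' n, A (n + 1) := Summable.tsum_eq_zero_add hAsum
  have hBtel : ∑' n, B n = B 0 + ∑' n, B (n + 1) := Summable.tsum_eq_zero_add hBsum'
  have hA0 : A 0 = 1 := hg1
  have hB0v : B 0 = (1 + m - ρ) / m := hgq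
  set S : ℝ := ∑' n, B (n + 1) with hS
  have hSeq : S = ρ * (B 0 - A 0 + S) := by
    conv_lhs => rw [hSrec, hAtel, hBtel]
    ring
  rw [hA0, hB0v] at hSeq
  have hSval : S = ρ / m := by
    have hm' : m ≠ 0 := ne_of_gt hm
    have hρ1' : (1 : ℝ) - ρ ≠ 0 := by
      intro h; have : ρ = 1 := by linarith
      linarith
    field_simp at hSeq ⊢
    nlinarith [hSeq]
  show m * S = ρ
  rw [hSval]; field_simp
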